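/- arXiv:2408.16626 — 5 statements merged into one kernel-verified Lean document; each statement's English description precedes it below -/
import Mathlib

section
/- Let d ≥ 1, let π be a probability density on ℝ^d (the prior for μ₀), and suppose the conditional density of x given μ₀ has the exponential-family form p(x | μ₀) = p₀(x) · exp(⟨μ₀, F(x)⟩ − φ(μ₀)), where p₀ : ℝ^d → (0,∞) and F : ℝ^d → ℝ^d are differentiable at a point x, and φ : ℝ^d → ℝ normalizes the density. Let p(x) = ∫ π(μ₀) p(x | μ₀) dμ₀ be the marginal density, assume p(x) > 0, assume ∫ ‖μ₀‖ π(μ₀) p(x | μ₀) dμ₀ < ∞ so the posterior mean μ̄₀(x) = (1/p(x)) ∫ μ₀ π(μ₀) p(x | μ₀) dμ₀ is well defined, and assume differentiation under the integral sign is valid at x (i.e., there is a neighbourhood of x and an integrable dominating function for the μ₀-indexed family of gradients ∇_x [π(μ₀) p(· | μ₀)]). Then p is differentiable at x and (DF(x))* μ̄₀(x) = ∇ log p(x) − ∇ log p₀(x), where DF(x) is the Fréchet derivative of F at x and (DF(x))* its adjoint. -/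
open MeasureTheory

noncomputable section

open InnerProductSpace in
private lemma tweedie_aux_fderiv (d : ℕ)
    (π p₀ φ : EuclideanSpace ℝ (Fin d) → ℝ)
    (F : EuclideanSpace ℝ (Fin d) → EuclideanSpace ℝ (Fin d))
    (x : EuclideanSpace ℝ (Fin d))
    (pcond : EuclideanSpace ℝ (Fin d) → EuclideanSpace ℝ (Fin d) → ℝ)
    (hpcond : ∀ x' μ₀, pcond x' μ₀
      = p₀ x' * Real.exp ((inner ℝ μ₀ (F x') : ℝ) - φ μ₀))
    (hp₀_pos : ∀ x', 0 < p₀ x')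
    (hp₀_diff : DifferentiableAt ℝ p₀ x)
    (hF_diff : DifferentiableAt ℝ F x)
    (a : EuclideanSpace ℝ (Fin d)) :
    HasFDerivAt (fun x' => π a * pcond x' a)
      (((p₀ x)⁻¹ * (π a * pcond x a)) • (fderiv ℝ p₀ x)
        + (π a * pcond x a) • ((innerSL ℝ a).comp (fderiv ℝ F x))) x := by
  have h1 : HasFDerivAt (fun x' => (inner ℝ a (F x') : ℝ))
      ((innerSL ℝ a).comp (fderiv ℝ F x)) x :=
    ((innerSL ℝ a).hasFDerivAt).comp x hF_diff.hasFDerivAt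
  have h2 : HasFDerivAt (fun x' => (inner ℝ a (F x') : ℝ) - φ a)
      ((innerSL ℝ a).comp (fderiv ℝ F x)) x := h1.sub_const _
  have h3 := (Real.hasDerivAt_exp ((inner ℝ a (F x) : ℝ) - φ a)).comp_hasFDerivAt x h2
  have h4 := hp₀_diff.hasFDerivAt.mul h3
  have h5 := h4.const_mul (π a)
  have he : pcond x a = p₀ x * Real.exp ((inner ℝ a (F x) : ℝ) - φ a) := hpcond x a
  refine (h5.congr_fderiv ?_).congr_of_eventuallyEq ?_
  · rw [he]
    ext v
    simp only [ContinuousLinearMap.add_apply, ContinuousLinearMap.smul_apply,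
      ContinuousLinearMap.coe_smul', Pi.smul_apply, smul_eq_mul, Function.comp_apply]
    field_simp [(hp₀_pos x).ne']
    ring
  · exact Filter.Eventually.of_forall fun x' => by show π a * pcond x' a = _; rw [hpcond]; rfl


/-- **Tweedie's formula for exponential families.** Given a prior density `π` on `ℝ^d` and an
exponential-family conditional density `p(x|μ₀) = p₀(x) exp(⟨μ₀, F(x)⟩ − φ(μ₀))`, with marginal
`p(x) = ∫ π(μ₀) p(x|μ₀) dμ₀ > 0`, integrable first posterior moment, and differentiation under
the integral sign valid at `x`, the marginal `p` is differentiable at `x` and the posterior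
mean `μ̄₀(x)` satisfies `(DF(x))* μ̄₀(x) = ∇ log p(x) − ∇ log p₀(x)`. -/
theorem tweedie_formula
    (d : ℕ) (hd : 1 ≤ d)
    (π p₀ φ : EuclideanSpace ℝ (Fin d) → ℝ)
    (F : EuclideanSpace ℝ (Fin d) → EuclideanSpace ℝ (Fin d))
    (x : EuclideanSpace ℝ (Fin d))
    -- `π` is a probability density
    (hπ_meas : Measurable π) (hπ_nonneg : ∀ μ₀, 0 ≤ π μ₀)
    (hπ_int : ∫ μ₀, π μ₀ = 1)
    -- the exponential-family conditional density
    (pcond : EuclideanSpace ℝ (Fin d) → EuclideanSpace ℝ (Fin d) → ℝ)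
    (hpcond : ∀ x' μ₀, pcond x' μ₀
      = p₀ x' * Real.exp ((inner ℝ μ₀ (F x') : ℝ) - φ μ₀))
    (hp₀_pos : ∀ x', 0 < p₀ x')
    (hp₀_diff : DifferentiableAt ℝ p₀ x)
    (hF_diff : DifferentiableAt ℝ F x)
    -- the marginal density, positive at `x`
    (p : EuclideanSpace ℝ (Fin d) → ℝ)
    (hp : ∀ x', p x' = ∫ μ₀, π μ₀ * pcond x' μ₀)
    (hp_pos : 0 < p x)
    -- integrability of the first moment, so the posterior mean is well defined
    (h_mom : Integrable (fun μ₀ => ‖μ₀‖ * (π μ₀ * pcond x μ₀)))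
    (μbar₀ : EuclideanSpace ℝ (Fin d))
    (hμbar₀ : μbar₀ = (p x)⁻¹ • ∫ μ₀, (π μ₀ * pcond x μ₀) • μ₀)
    -- differentiation under the integral sign is valid at `x`
    (h_dui : ∃ ε > (0 : ℝ), ∃ bound : EuclideanSpace ℝ (Fin d) → ℝ,
      Integrable bound ∧
      ∀ μ₀, ∀ x' ∈ Metric.ball x ε,
        HasGradientAt (fun x'' => π μ₀ * pcond x'' μ₀)
          (gradient (fun x'' => π μ₀ * pcond x'' μ₀) x') x' ∧
        ‖gradient (fun x'' => π μ₀ * pcond x'' μ₀) x'‖ ≤ bound μ₀) :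
    DifferentiableAt ℝ p x ∧
      (ContinuousLinearMap.adjoint (fderiv ℝ F x)) μbar₀
        = gradient (fun x' => Real.log (p x')) x
          - gradient (fun x' => Real.log (p₀ x')) x := by
  classical
  set G := fderiv ℝ F x with hG
  set G' := ContinuousLinearMap.adjoint G with hG'
  set td := InnerProductSpace.toDual ℝ (EuclideanSpace ℝ (Fin d)) with htd
  set f : EuclideanSpace ℝ (Fin d) → EuclideanSpace ℝ (Fin d) → ℝ :=
    fun a x' => π a * pcond x' a with hf
  have hpc_pos : ∀ x' a, 0 < pcond x' a := by
    intro x' a; rw [hpcond]; exact mul_pos (hp₀_pos x') (Real.exp_pos _)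
  have hf_nonneg : ∀ a, 0 ≤ f a x := fun a => mul_nonneg (hπ_nonneg a) (hpc_pos x a).le
  have hp_int : Integrable (fun a => f a x) := by
    refine Integrable.of_integral_ne_zero ?_
    rw [show (∫ a, f a x) = p x from (hp x).symm]
    exact hp_pos.ne'
  have h_int_smul : Integrable (fun a => (f a x) • a) := by
    refine h_mom.mono' (hp_int.aestronglyMeasurable.smul
      aemeasurable_id.aestronglyMeasurable) ?_
    filter_upwards with a
    rw [norm_smul, Real.norm_eq_abs, abs_of_nonneg (hf_nonneg a), mul_comm]
  set g : EuclideanSpace ℝ (Fin d) → EuclideanSpace ℝ (Fin d) := fun a =>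
    ((p₀ x)⁻¹ * f a x) • gradient p₀ x + (f a x) • (G' a) with hg
  have htd_grad_p₀ : td (gradient p₀ x) = fderiv ℝ p₀ x := by
    rw [gradient, htd, LinearIsometryEquiv.apply_symm_apply]
  have htd_adj : ∀ a, td (G' a) = (innerSL ℝ a).comp G := by
    intro a; ext v
    simp only [htd, InnerProductSpace.toDual_apply_apply, ContinuousLinearMap.comp_apply,
      innerSL_apply_apply, hG']
    exact ContinuousLinearMap.adjoint_inner_left G v a
  have hkey : ∀ a, HasGradientAt (fun x' => f a x') (g a) x := by
    intro a
    rw [hasGradientAt_iff_hasFDerivAt]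
    have : td (g a)
        = ((p₀ x)⁻¹ * f a x) • (fderiv ℝ p₀ x) + (f a x) • ((innerSL ℝ a).comp G) := by
      simp only [hg, map_add, map_smulₛₗ, starRingEnd_apply, star_trivial,
        htd_grad_p₀, htd_adj a]
    rw [show (InnerProductSpace.toDual ℝ (EuclideanSpace ℝ (Fin d))) (g a) = td (g a) from rfl,
      this]
    exact tweedie_aux_fderiv d π p₀ φ F x pcond hpcond hp₀_pos hp₀_diff hF_diff a
  have hgrad_eq : ∀ a, gradient (fun x' => f a x') x = g a := fun a => (hkey a).gradient
  have hmeas : ∀ x', AEStronglyMeasurable (fun a => f a x') volume := by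
    intro x'
    have : (fun a => f a x')
        = fun a => f a x * ((p₀ x' / p₀ x) * Real.exp ((inner ℝ a (F x' - F x) : ℝ))) := by
      funext a
      simp only [hf]
      rw [hpcond x' a, hpcond x a, inner_sub_right]
      rw [show Real.exp ((inner ℝ a (F x') : ℝ) - φ a)
          = Real.exp ((inner ℝ a (F x) : ℝ) - φ a)
            * Real.exp ((inner ℝ a (F x') : ℝ) - (inner ℝ a (F x) : ℝ)) by
        rw [← Real.exp_add]; ring_nf]
      field_simp [(hp₀_pos x).ne']
    rw [this]
    exact hp_int.aestronglyMeasurable.mul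
      ((continuous_const.mul (Real.continuous_exp.comp
        (continuous_id.inner continuous_const))).aestronglyMeasurable)
  have hg_meas : AEStronglyMeasurable g volume :=
    ((hp_int.aestronglyMeasurable.const_mul _).smul aestronglyMeasurable_const).add
      (hp_int.aestronglyMeasurable.smul (G'.continuous.aestronglyMeasurable))
  have hg_int : Integrable g := by
    refine Integrable.add ?_ ?_
    · exact (hp_int.const_mul _).smul_const _
    · have : (fun a => (f a x) • (G' a)) = fun a => G' ((f a x) • a) := by
        funext a; rw [G'.map_smul]
      rw [this]
      exact G'.integrable_comp h_int_smul
  obtain ⟨ε, hε, bound, hbound_int, hbound⟩ := h_dui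
  have hmain : HasFDerivAt (fun x' => ∫ a, f a x')
      (∫ a, td (gradient (fun x'' => f a x'') x)) x := by
    refine hasFDerivAt_integral_of_dominated_of_fderiv_le
      (F := fun x' a => f a x')
      (F' := fun x' a => td (gradient (fun x'' => f a x'') x')) (Metric.ball_mem_nhds x hε)
      (Filter.Eventually.of_forall hmeas) hp_int ?_ ?_ hbound_int ?_
    · refine (td.continuous.comp_aestronglyMeasurable hg_meas).congr ?_
      filter_upwards with a
      simp only [hgrad_eq a]
    · filter_upwards with a
      intro x' hx'
      rw [LinearIsometryEquiv.norm_map]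
      exact (hbound a x' hx').2
    · filter_upwards with a
      intro x' hx'
      exact (hbound a x' hx').1
  have hDp : HasFDerivAt p (td (∫ a, g a)) x := by
    have h1 : (∫ a, td (gradient (fun x'' => f a x'') x)) = td (∫ a, g a) := by
      have : (fun a => td (gradient (fun x'' => f a x'') x)) = fun a => td (g a) := by
        funext a; rw [hgrad_eq a]
      rw [this]
      exact (InnerProductSpace.toDual ℝ
        (EuclideanSpace ℝ (Fin d))).toLinearIsometry.integral_comp_comm g
    have h2 : p = fun x' => ∫ a, f a x' := funext hp
    rw [h2, ← h1]
    exact hmain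
  have hIg : ∫ a, g a = ((p₀ x)⁻¹ * p x) • gradient p₀ x + G' (p x • μbar₀) := by
    rw [hg, integral_add ((hp_int.const_mul _).smul_const _)
      (by
        have : (fun a => (f a x) • (G' a)) = fun a => G' ((f a x) • a) := by
          funext a; rw [G'.map_smul]
        rw [this]; exact G'.integrable_comp h_int_smul)]
    congr 1
    · rw [integral_smul_const, integral_const_mul, ← hp x]
    · have h3 : (fun a => (f a x) • (G' a)) = fun a => G' ((f a x) • a) := by
        funext a; rw [G'.map_smul]
      rw [h3, G'.integral_comp_comm h_int_smul]
      congr 1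
      rw [hμbar₀, smul_smul, mul_inv_cancel₀ hp_pos.ne', one_smul]
  have hlogp : gradient (fun x' => Real.log (p x')) x = (p x)⁻¹ • ∫ a, g a := by
    refine HasGradientAt.gradient ?_
    rw [hasGradientAt_iff_hasFDerivAt]
    have h := (Real.hasDerivAt_log hp_pos.ne').comp_hasFDerivAt x hDp
    rw [show (InnerProductSpace.toDual ℝ (EuclideanSpace ℝ (Fin d)))
      ((p x)⁻¹ • ∫ a, g a) = td ((p x)⁻¹ • ∫ a, g a) from rfl, map_smulₛₗ,
      starRingEnd_apply, star_trivial]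
    exact h
  have hlogp₀ : gradient (fun x' => Real.log (p₀ x')) x = (p₀ x)⁻¹ • gradient p₀ x := by
    refine HasGradientAt.gradient ?_
    rw [hasGradientAt_iff_hasFDerivAt]
    have h := (Real.hasDerivAt_log (hp₀_pos x).ne').comp_hasFDerivAt x hp₀_diff.hasFDerivAt
    rw [show (InnerProductSpace.toDual ℝ (EuclideanSpace ℝ (Fin d)))
      ((p₀ x)⁻¹ • gradient p₀ x) = td ((p₀ x)⁻¹ • gradient p₀ x) from rfl,
      map_smulₛₗ, starRingEnd_apply, star_trivial, htd_grad_p₀]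
    exact h
  refine ⟨hDp.differentiableAt, ?_⟩
  rw [hlogp, hlogp₀, hIg, G'.map_smul]
  match_scalars <;> field_simp <;> ring
end
end

section
/- Let d ≥ 1, v > 0, a > 0, and let π be a probability density on ℝ^d with finite first moment ∫ ‖μ₀‖ π(μ₀) dμ₀ < ∞. Define the marginal density p(x) = ∫ π(μ₀) k(x; a μ₀, v) dμ₀. Fix x ∈ ℝ^d with p(x) > 0 and define the posterior mean μ̄₀(x) = (1/p(x)) ∫ μ₀ π(μ₀) k(x; a μ₀, v) dμ₀. Then p is differentiable at x and μ̄₀(x) = (1/a)·(x + v ∇ log p(x)). -/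
open MeasureTheory

noncomputable section

/-- The Gaussian kernel `k(x; m, v) = (2πv)^{-d/2} exp(-‖x − m‖²/(2v))` on `ℝ^d`. -/
def gaussK (d : ℕ) (v : ℝ) (m x : EuclideanSpace ℝ (Fin d)) : ℝ :=
  (2 * Real.pi * v) ^ (-(d : ℝ) / 2) * Real.exp (-‖x - m‖ ^ 2 / (2 * v))


lemma gaussK_nonneg {d : ℕ} {v : ℝ} (hv : 0 < v) (m y : EuclideanSpace ℝ (Fin d)) :
    0 ≤ gaussK d v m y := by
  unfold gaussK
  positivity

lemma gaussK_le {d : ℕ} {v : ℝ} (hv : 0 < v) (m y : EuclideanSpace ℝ (Fin d)) :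
    gaussK d v m y ≤ (2 * Real.pi * v) ^ (-(d : ℝ) / 2) := by
  unfold gaussK
  have h1 : Real.exp (-‖y - m‖ ^ 2 / (2 * v)) ≤ 1 := by
    apply Real.exp_le_one_iff.mpr
    rw [neg_div]
    have : (0:ℝ) ≤ ‖y - m‖ ^ 2 / (2 * v) := by positivity
    linarith
  have h2 : (0:ℝ) < (2 * Real.pi * v) ^ (-(d : ℝ) / 2) := by
    apply Real.rpow_pos_of_pos
    positivity
  nlinarith

lemma gaussK_hasFDerivAt {d : ℕ} {v : ℝ} (hv : 0 < v) (m y : EuclideanSpace ℝ (Fin d)) :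
    HasFDerivAt (gaussK d v m) (innerSL ℝ ((gaussK d v m y / v) • (m - y))) y := by
  have h1 : HasFDerivAt (fun z : EuclideanSpace ℝ (Fin d) => z - m)
      (ContinuousLinearMap.id ℝ _) y := (hasFDerivAt_id y).sub_const m
  have h2 : HasFDerivAt (fun z : EuclideanSpace ℝ (Fin d) => ‖z - m‖ ^ 2)
      ((2:ℕ) • (innerSL ℝ (y - m))) y := by
    simpa using h1.norm_sq
  have h3 : HasFDerivAt (fun z : EuclideanSpace ℝ (Fin d) => -‖z - m‖ ^ 2 / (2 * v))
      ((-(2*v)⁻¹) • ((2:ℕ) • (innerSL ℝ (y - m)))) y := by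
    have hfe : (fun z : EuclideanSpace ℝ (Fin d) => -‖z - m‖ ^ 2 / (2*v))
        = fun z => (-(2*v)⁻¹) * ‖z - m‖ ^ 2 := by
      funext z; ring
    rw [hfe]
    exact h2.const_mul _
  have h4 := h3.exp
  have h5 := h4.const_mul ((2 * Real.pi * v) ^ (-(d : ℝ) / 2))
  have heq : (gaussK d v m) = fun z => (2 * Real.pi * v) ^ (-(d : ℝ) / 2) *
      Real.exp (-‖z - m‖ ^ 2 / (2 * v)) := rfl
  rw [heq]
  refine h5.congr_fderiv ?_
  refine ContinuousLinearMap.ext fun z => ?_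
  simp only [ContinuousLinearMap.smul_apply, innerSL_apply_apply,
    ContinuousLinearMap.coe_smul', Pi.smul_apply, nsmul_eq_mul, smul_eq_mul,
    real_inner_smul_left]
  have : (inner ℝ (m - y) z : ℝ) = - inner ℝ (y - m) z := by
    rw [← inner_neg_left, neg_sub]
  rw [this]
  field_simp
  ring

/-- **Tweedie's formula for the variance-preserving (DDPM) Gaussian transition kernel.**
If `p(x) = ∫ π(μ₀) k(x; a μ₀, v) dμ₀` is the marginal of a prior density `π` with finite first
moment under Gaussian noising with mean shrink factor `a > 0` and variance `v > 0`, and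
`p(x) > 0`, then `p` is differentiable at `x` and the posterior mean satisfies
`μ̄₀(x) = (1/a)(x + v ∇ log p(x))`. -/
theorem tweedie_vp
    (d : ℕ) (hd : 1 ≤ d) (v : ℝ) (hv : 0 < v) (a : ℝ) (ha : 0 < a)
    (π : EuclideanSpace ℝ (Fin d) → ℝ)
    (hπ_meas : Measurable π) (hπ_nonneg : ∀ μ₀, 0 ≤ π μ₀)
    (hπ_int : ∫ μ₀, π μ₀ = 1)
    (h_mom : Integrable (fun μ₀ => ‖μ₀‖ * π μ₀))
    (p : EuclideanSpace ℝ (Fin d) → ℝ)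
    (hp : ∀ x', p x' = ∫ μ₀, π μ₀ * gaussK d v (a • μ₀) x')
    (x : EuclideanSpace ℝ (Fin d)) (hp_pos : 0 < p x)
    (μbar₀ : EuclideanSpace ℝ (Fin d))
    (hμbar₀ : μbar₀ = (p x)⁻¹ • ∫ μ₀, (π μ₀ * gaussK d v (a • μ₀) x) • μ₀) :
    DifferentiableAt ℝ p x ∧
      μbar₀ = a⁻¹ • (x + v • gradient (fun x' => Real.log (p x')) x) := by
  set C : ℝ := (2 * Real.pi * v) ^ (-(d : ℝ) / 2) with hC_def
  have hC : 0 < C := by apply Real.rpow_pos_of_pos; positivity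
  -- integrability of π
  have hπ_integrable : Integrable π := by
    by_contra h
    rw [integral_undef h] at hπ_int
    norm_num at hπ_int
  -- the integrand and its pointwise derivative
  set F : EuclideanSpace ℝ (Fin d) → EuclideanSpace ℝ (Fin d) → ℝ := fun y μ => π μ * gaussK d v (a • μ) y with hF_def
  set g : EuclideanSpace ℝ (Fin d) → EuclideanSpace ℝ (Fin d) → EuclideanSpace ℝ (Fin d) := fun y μ => (π μ * gaussK d v (a • μ) y / v) • (a • μ - y) with hg_def
  -- measurability facts
  have hk : ∀ y : EuclideanSpace ℝ (Fin d),
      Measurable fun μ : EuclideanSpace ℝ (Fin d) => gaussK d v (a • μ) y := by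
    intro y
    exact Continuous.measurable (by unfold gaussK; fun_prop)
  have hFmeas : ∀ y : EuclideanSpace ℝ (Fin d), AEStronglyMeasurable (F y) volume := by
    intro y
    exact (hπ_meas.mul (hk y)).aestronglyMeasurable
  have hgmeas : ∀ y : EuclideanSpace ℝ (Fin d), AEStronglyMeasurable (g y) volume := by
    intro y
    apply Measurable.aestronglyMeasurable
    refine Measurable.smul (f := fun μ => π μ * gaussK d v (a • μ) y / v) (g := fun μ => a • μ - y) ?_ ?_
    · exact (hπ_meas.mul (hk y)).div_const v
    · exact (measurable_const_smul a).sub measurable_const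
  -- pointwise bounds
  have hF_nonneg : ∀ y μ : EuclideanSpace ℝ (Fin d), 0 ≤ F y μ := fun y μ =>
    mul_nonneg (hπ_nonneg μ) (gaussK_nonneg hv _ _)
  have hF_le : ∀ y μ : EuclideanSpace ℝ (Fin d), F y μ ≤ C * π μ := by
    intro y μ
    rw [mul_comm C (π μ)]
    exact mul_le_mul_of_nonneg_left (gaussK_le hv _ _) (hπ_nonneg μ)
  -- integrability of F y
  have hF_int : ∀ y : EuclideanSpace ℝ (Fin d), Integrable (F y) := by
    intro y
    refine Integrable.mono' (hπ_integrable.const_mul C) (hFmeas y) ?_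
    filter_upwards with μ
    rw [Real.norm_of_nonneg (hF_nonneg y μ)]
    exact hF_le y μ
  -- the dominating bound for the derivative
  set bound : EuclideanSpace ℝ (Fin d) → ℝ := fun μ => (v⁻¹ * C) * (a * (‖μ‖ * π μ) + (‖x‖ + 1) * π μ)
    with hbound_def
  have hbound_int : Integrable bound :=
    ((h_mom.const_mul a).add (hπ_integrable.const_mul (‖x‖ + 1))).const_mul _
  have hg_bound : ∀ (μ : EuclideanSpace ℝ (Fin d)), ∀ y ∈ Metric.ball x 1, ‖g y μ‖ ≤ bound μ := by
    intro μ y hy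
    rw [hg_def]
    simp only [norm_smul, Real.norm_eq_abs]
    have h1 : |π μ * gaussK d v (a • μ) y / v| ≤ π μ * C / v := by
      rw [abs_of_nonneg (div_nonneg (hF_nonneg y μ) hv.le)]
      gcongr
      exact mul_le_mul_of_nonneg_left (gaussK_le hv _ _) (hπ_nonneg μ)
    have h2 : ‖a • μ - y‖ ≤ a * ‖μ‖ + (‖x‖ + 1) := by
      calc ‖a • μ - y‖ ≤ ‖a • μ‖ + ‖y‖ := norm_sub_le _ _
        _ ≤ a * ‖μ‖ + (‖x‖ + 1) := by
            have : ‖y‖ ≤ ‖x‖ + 1 := by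
              have h3 := mem_ball_iff_norm.mp hy
              have h4 : ‖y‖ ≤ ‖x‖ + ‖y - x‖ := by
                have := norm_add_le x (y - x)
                simpa using this
              linarith
            rw [norm_smul, Real.norm_of_nonneg ha.le]
            linarith
    calc |π μ * gaussK d v (a • μ) y / v| * ‖a • μ - y‖
        ≤ (π μ * C / v) * (a * ‖μ‖ + (‖x‖ + 1)) := by
          exact mul_le_mul h1 h2 (norm_nonneg _)
            (div_nonneg (mul_nonneg (hπ_nonneg μ) hC.le) hv.le)
      _ = bound μ := by rw [hbound_def]; ring
  -- derivative of F in y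
  have hF_deriv : ∀ (μ : EuclideanSpace ℝ (Fin d)), ∀ y : EuclideanSpace ℝ (Fin d), HasFDerivAt (fun y' => F y' μ)
      (innerSL ℝ (g y μ)) y := by
    intro μ y
    have h := (gaussK_hasFDerivAt hv (a • μ) y).const_mul (π μ)
    refine h.congr_fderiv ?_
    symm
    rw [hg_def]
    simp only
    rw [← (innerSL ℝ).map_smul, smul_smul, ← mul_div_assoc]
  -- integrability of g x
  have hg_int : Integrable (g x) := by
    refine Integrable.mono' hbound_int (hgmeas x) ?_
    filter_upwards with μ
    exact hg_bound μ x (Metric.mem_ball_self one_pos)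
  -- differentiate under the integral sign
  have key : HasFDerivAt (fun y => ∫ μ, F y μ) (∫ μ, innerSL ℝ (g x μ)) x := by
    apply hasFDerivAt_integral_of_dominated_of_fderiv_le
      (bound := bound) (F' := fun y μ => innerSL ℝ (g y μ)) (Metric.ball_mem_nhds x one_pos)
    · filter_upwards with y using hFmeas y
    · exact hF_int x
    · exact (innerSL ℝ).continuous.comp_aestronglyMeasurable (hgmeas x)
    · filter_upwards with μ
      intro y hy
      rw [innerSL_apply_norm]
      exact hg_bound μ y hy
    · exact hbound_int
    · filter_upwards with μ
      intro y hy
      exact hF_deriv μ y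
  have hp_fun : p = fun y => ∫ μ, F y μ := funext hp
  have hpd : HasFDerivAt p (innerSL ℝ (∫ μ, g x μ)) x := by
    rw [hp_fun]
    rw [← ContinuousLinearMap.integral_comp_comm (innerSL ℝ) hg_int]
    exact key
  refine ⟨hpd.differentiableAt, ?_⟩
  -- gradient of log p
  have hcomp : HasFDerivAt (fun y => Real.log (p y))
      ((p x)⁻¹ • innerSL ℝ (∫ μ, g x μ)) x :=
    (Real.hasDerivAt_log hp_pos.ne').comp_hasFDerivAt x hpd
  have hgrad_log : HasGradientAt (fun y => Real.log (p y))
      ((p x)⁻¹ • ∫ μ, g x μ) x := by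
    rw [hasGradientAt_iff_hasFDerivAt]
    refine hcomp.congr_fderiv ?_
    refine ContinuousLinearMap.ext fun z => ?_
    simp [InnerProductSpace.toDual_apply_apply, real_inner_smul_left, real_inner_comm]
  have hgrad_val : gradient (fun x' => Real.log (p x')) x = (p x)⁻¹ • ∫ μ, g x μ :=
    hgrad_log.gradient
  -- compute the integral of g x
  have hI_int : Integrable (fun μ => (F x μ) • μ) := by
    refine Integrable.mono' (h_mom.const_mul C) ((hFmeas x).smul aestronglyMeasurable_id) ?_
    filter_upwards with μ
    rw [norm_smul, Real.norm_of_nonneg (hF_nonneg x μ)]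
    calc F x μ * ‖μ‖ ≤ (C * π μ) * ‖μ‖ := mul_le_mul_of_nonneg_right (hF_le x μ) (norm_nonneg μ)
      _ = C * (‖μ‖ * π μ) := by ring
  have hG : (∫ μ, g x μ) = v⁻¹ • (a • ∫ μ, F x μ • μ) - v⁻¹ • ((p x) • x) := by
    have h1 : ∀ μ : EuclideanSpace ℝ (Fin d),
        g x μ = v⁻¹ • (a • (F x μ • μ) - F x μ • x) := by
      intro μ
      rw [hg_def, hF_def]
      simp only
      match_scalars <;> ring
    have h2 : Integrable (fun μ => a • (F x μ • μ)) := hI_int.smul a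
    have h3 : Integrable (fun μ => F x μ • x) := (hF_int x).smul_const x
    simp only [h1]
    rw [integral_smul, integral_sub h2 h3, integral_smul, integral_smul_const,
      ← hp x, smul_sub]
  -- final algebra
  have hIeq : (∫ μ₀, (π μ₀ * gaussK d v (a • μ₀) x) • μ₀)
      = ∫ μ, F x μ • μ := rfl
  rw [hμbar₀, hIeq, hgrad_val, hG]
  have hvne : v ≠ 0 := hv.ne'
  have hane : a ≠ 0 := ha.ne'
  have hpne : p x ≠ 0 := hp_pos.ne'
  match_scalars <;> field_simp <;> ring
end
end

section
/- Let d ≥ 1, v > 0, let m : ℝ^d → ℝ^d be measurable, and let π be a probability density on ℝ^d. Define the marginal density p(x) = ∫ π(x₀) k(x; m(x₀), v) dx₀ and fix x ∈ ℝ^d with p(x) > 0. Then p is differentiable at x, its gradient is ∇p(x) = ∫ π(x₀) · ((m(x₀) − x)/v) · k(x; m(x₀), v) dx₀, and consequently the score of the marginal is the posterior average of the conditional score: ∇ log p(x) = ∫ (π(x₀) k(x; m(x₀), v) / p(x)) · ((m(x₀) − x)/v) dx₀, where (m(x₀) − x)/v = ∇_x log k(x; m(x₀), v). -/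
open MeasureTheory

noncomputable section

lemma gaussK_pos {d : ℕ} {v : ℝ} (hv : 0 < v) (w y : EuclideanSpace ℝ (Fin d)) :
    0 < gaussK d v w y :=
  mul_pos (Real.rpow_pos_of_pos (by positivity) _) (Real.exp_pos _)

lemma hasFDerivAt_gaussK {d : ℕ} {v : ℝ} (hv : 0 < v) (w y : EuclideanSpace ℝ (Fin d)) :
    HasFDerivAt (fun x' => gaussK d v w x')
      (innerSL ℝ ((gaussK d v w y) • (v⁻¹ • (w - y)))) y := by
  have h1 : HasFDerivAt (fun x' : EuclideanSpace ℝ (Fin d) => ‖x' - w‖ ^ 2)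
      (2 • (innerSL ℝ (y - w))) y := by
    simpa using ((hasFDerivAt_id y).sub_const w).norm_sq
  have h2 : HasFDerivAt (fun x' : EuclideanSpace ℝ (Fin d) => -‖x' - w‖ ^ 2 / (2 * v))
      ((-(2 * v)⁻¹) • (2 • (innerSL ℝ (y - w)))) y := by
    have := h1.const_mul (-(2 * v)⁻¹)
    refine this.congr_of_eventuallyEq (Filter.Eventually.of_forall fun x' => ?_)
    ring
  have h3 := (Real.hasDerivAt_exp (-‖y - w‖ ^ 2 / (2 * v))).comp_hasFDerivAt y h2
  have h4 := h3.const_mul ((2 * Real.pi * v) ^ (-(d : ℝ) / 2))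
  refine h4.congr_fderiv ?_
  ext z
  simp only [gaussK, Function.comp_def, innerSL_apply_apply, real_inner_smul_left,
    ContinuousLinearMap.smul_apply, smul_eq_mul, ContinuousLinearMap.coe_smul',
    Pi.smul_apply, inner_sub_left, inner_neg_left]
  simp only [nsmul_eq_mul, Nat.cast_ofNat]
  field_simp
  ring_nf

lemma hasGradientAt_log_gaussK {d : ℕ} {v : ℝ} (hv : 0 < v) (w y : EuclideanSpace ℝ (Fin d)) :
    HasGradientAt (fun x' => Real.log (gaussK d v w x')) (v⁻¹ • (w - y)) y := by
  have hK := gaussK_pos hv w y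
  have h := (Real.hasDerivAt_log hK.ne').comp_hasFDerivAt y (hasFDerivAt_gaussK hv w y)
  rw [hasGradientAt_iff_hasFDerivAt]
  refine h.congr_fderiv ?_
  ext z
  simp only [InnerProductSpace.toDual_apply_apply, Function.comp_def,
    ContinuousLinearMap.coe_smul', Pi.smul_apply, innerSL_apply_apply, real_inner_smul_left,
    smul_eq_mul]
  rw [← mul_assoc, inv_mul_cancel₀ hK.ne', one_mul]

/-- **The score of a Gaussian-smoothed marginal is the posterior average of the conditional
score.** For `p(x) = ∫ π(x₀) k(x; m(x₀), v) dx₀` with `p(x) > 0`, the density `p` is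
differentiable at `x`, `∇p(x) = ∫ π(x₀) ((m(x₀) − x)/v) k(x; m(x₀), v) dx₀`, and
`∇ log p(x) = ∫ (π(x₀) k(x; m(x₀), v)/p(x)) ((m(x₀) − x)/v) dx₀`, where
`(m(x₀) − x)/v = ∇ₓ log k(x; m(x₀), v)`. -/
theorem score_of_gaussian_marginal
    (d : ℕ) (hd : 1 ≤ d) (v : ℝ) (hv : 0 < v)
    (m : EuclideanSpace ℝ (Fin d) → EuclideanSpace ℝ (Fin d)) (hm : Measurable m)
    (π : EuclideanSpace ℝ (Fin d) → ℝ)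
    (hπ_meas : Measurable π) (hπ_nonneg : ∀ x₀, 0 ≤ π x₀)
    (hπ_int : ∫ x₀, π x₀ = 1)
    (p : EuclideanSpace ℝ (Fin d) → ℝ)
    (hp : ∀ x', p x' = ∫ x₀, π x₀ * gaussK d v (m x₀) x')
    (x : EuclideanSpace ℝ (Fin d)) (hp_pos : 0 < p x) :
    DifferentiableAt ℝ p x ∧
      gradient p x = ∫ x₀, (π x₀ * gaussK d v (m x₀) x) • (v⁻¹ • (m x₀ - x)) ∧
      gradient (fun x' => Real.log (p x')) x
        = ∫ x₀, ((π x₀ * gaussK d v (m x₀) x) / p x) • (v⁻¹ • (m x₀ - x)) ∧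
      ∀ x₀, gradient (fun x' => Real.log (gaussK d v (m x₀) x')) x
        = v⁻¹ • (m x₀ - x) := by
  have hC : (0:ℝ) < (2 * Real.pi * v) ^ (-(d : ℝ) / 2) :=
    Real.rpow_pos_of_pos (by positivity) _
  set C : ℝ := (2 * Real.pi * v) ^ (-(d : ℝ) / 2) with hC_def
  -- π is integrable
  have hπ_integrable : Integrable π := by
    by_contra h
    rw [integral_undef h] at hπ_int
    norm_num at hπ_int
  -- measurability of a ↦ gaussK d v (m a) x'
  have hKmeas : ∀ x' : EuclideanSpace ℝ (Fin d), Measurable fun a => gaussK d v (m a) x' := by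
    intro x'
    have hc : Continuous fun w : EuclideanSpace ℝ (Fin d) => gaussK d v w x' := by
      unfold gaussK; fun_prop
    exact hc.measurable.comp hm
  have hK_le : ∀ (w y : EuclideanSpace ℝ (Fin d)), gaussK d v w y ≤ C := by
    intro w y
    have h1 : Real.exp (-‖y - w‖ ^ 2 / (2 * v)) ≤ 1 := by
      apply Real.exp_le_one_iff.2
      rw [neg_div]
      have : (0:ℝ) ≤ ‖y - w‖ ^ 2 / (2 * v) := by positivity
      linarith
    calc gaussK d v w y = C * Real.exp (-‖y - w‖ ^ 2 / (2 * v)) := rfl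
      _ ≤ C * 1 := mul_le_mul_of_nonneg_left h1 hC.le
      _ = C := mul_one C
  -- key scalar bound
  have haux : ∀ t : ℝ, 0 ≤ t → t * Real.exp (-t ^ 2 / (2 * v)) ≤ 2 * v + 1 := by
    intro t ht
    rcases le_or_gt t 1 with h1 | h1
    · have he : Real.exp (-t ^ 2 / (2 * v)) ≤ 1 := by
        apply Real.exp_le_one_iff.2
        rw [neg_div]
        have : (0:ℝ) ≤ t ^ 2 / (2 * v) := by positivity
        linarith
      nlinarith [Real.exp_pos (-t ^ 2 / (2 * v))]
    · have hu : t ^ 2 / (2 * v) ≤ Real.exp (t ^ 2 / (2 * v)) :=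
        (Real.add_one_le_exp _).trans' (by linarith)
      have h2 : Real.exp (-t ^ 2 / (2 * v)) = (Real.exp (t ^ 2 / (2 * v)))⁻¹ := by
        rw [← Real.exp_neg]; ring_nf
      rw [h2]
      have htpos : 0 < t := lt_trans one_pos h1
      have h3 : (Real.exp (t ^ 2 / (2 * v)))⁻¹ ≤ (t ^ 2 / (2 * v))⁻¹ :=
        inv_anti₀ (by positivity) hu
      calc t * (Real.exp (t ^ 2 / (2 * v)))⁻¹ ≤ t * (t ^ 2 / (2 * v))⁻¹ :=
            mul_le_mul_of_nonneg_left h3 ht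
        _ = 2 * v / t := by field_simp
        _ ≤ 2 * v := by rw [div_le_iff₀ htpos]; nlinarith
        _ ≤ 2 * v + 1 := by linarith
  -- setup for differentiation under the integral sign
  set F' : EuclideanSpace ℝ (Fin d) → EuclideanSpace ℝ (Fin d) →
      (EuclideanSpace ℝ (Fin d) →L[ℝ] ℝ) := fun x' a =>
    innerSL ℝ ((π a * gaussK d v (m a) x') • (v⁻¹ • (m a - x'))) with hF'_def
  set g : EuclideanSpace ℝ (Fin d) → EuclideanSpace ℝ (Fin d) := fun a =>
    (π a * gaussK d v (m a) x) • (v⁻¹ • (m a - x)) with hg_def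
  set bound : EuclideanSpace ℝ (Fin d) → ℝ := fun a =>
    π a * (C * (2 * v + 1) * v⁻¹) with hbound_def
  have hnorm : ∀ (x' a : EuclideanSpace ℝ (Fin d)), ‖F' x' a‖ ≤ bound a := by
    intro x' a
    have hK := gaussK_pos hv (m a) x'
    rw [hF'_def]
    simp only [innerSL_apply_norm, norm_smul, Real.norm_eq_abs]
    rw [abs_of_nonneg (mul_nonneg (hπ_nonneg a) hK.le), abs_of_nonneg (inv_nonneg.2 hv.le)]
    have key : gaussK d v (m a) x' * ‖m a - x'‖ ≤ C * (2 * v + 1) := by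
      have hn : ‖m a - x'‖ = ‖x' - m a‖ := by rw [← norm_neg]; congr 1; abel
      calc gaussK d v (m a) x' * ‖m a - x'‖
          = C * (‖x' - m a‖ * Real.exp (-‖x' - m a‖ ^ 2 / (2 * v))) := by
            rw [hn]; simp only [gaussK, hC_def]; ring
        _ ≤ C * (2 * v + 1) :=
            mul_le_mul_of_nonneg_left (haux _ (norm_nonneg _)) hC.le
    calc π a * gaussK d v (m a) x' * (v⁻¹ * ‖m a - x'‖)
        = π a * (gaussK d v (m a) x' * ‖m a - x'‖) * v⁻¹ := by ring
      _ ≤ π a * (C * (2 * v + 1)) * v⁻¹ := by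
          apply mul_le_mul_of_nonneg_right _ (inv_nonneg.2 hv.le)
          exact mul_le_mul_of_nonneg_left key (hπ_nonneg a)
      _ = bound a := by rw [hbound_def]; ring
  have hbound_int : Integrable bound := hπ_integrable.mul_const _
  have hg_meas : ∀ x' : EuclideanSpace ℝ (Fin d),
      Measurable fun a => (π a * gaussK d v (m a) x') • (v⁻¹ • (m a - x')) := by
    intro x'
    apply (hπ_meas.mul (hKmeas x')).smul
    exact (hm.sub measurable_const).const_smul v⁻¹
  have hg_int : Integrable g := by
    apply Integrable.mono' hbound_int (hg_meas x).aestronglyMeasurable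
    filter_upwards with a
    have h := hnorm x a
    rw [hF'_def] at h
    simpa only [innerSL_apply_norm] using h
  -- differentiation under the integral sign
  have key : HasFDerivAt (fun x' => ∫ a, π a * gaussK d v (m a) x') (∫ a, F' x a) x := by
    apply hasFDerivAt_integral_of_dominated_of_fderiv_le (Metric.ball_mem_nhds x one_pos)
    · filter_upwards with x'
      exact (hπ_meas.mul (hKmeas x')).aestronglyMeasurable
    · apply Integrable.mono' (hπ_integrable.const_mul C)
        (hπ_meas.mul (hKmeas x)).aestronglyMeasurable
      filter_upwards with a
      simp only [Pi.mul_apply]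
      rw [Real.norm_eq_abs, abs_of_nonneg (mul_nonneg (hπ_nonneg a) (gaussK_pos hv _ _).le),
        mul_comm C (π a)]
      exact mul_le_mul_of_nonneg_left (hK_le _ _) (hπ_nonneg a)
    · exact ((innerSL ℝ).continuous.measurable.comp (hg_meas x)).aestronglyMeasurable
    · filter_upwards with a
      intro x' _
      exact hnorm x' a
    · exact hbound_int
    · filter_upwards with a
      intro x' _
      have h := (hasFDerivAt_gaussK hv (m a) x').const_mul (π a)
      rw [hF'_def]
      refine h.congr_fderiv ?_
      ext z
      simp only [innerSL_apply_apply, real_inner_smul_left, ContinuousLinearMap.coe_smul',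
        Pi.smul_apply, smul_eq_mul]
      ring
  have hcomm : ∫ a, F' x a = innerSL ℝ (∫ a, g a) := by
    rw [hF'_def, hg_def]
    exact ContinuousLinearMap.integral_comp_comm (innerSL ℝ) hg_int
  have hGrad : HasGradientAt p (∫ a, g a) x := by
    rw [hasGradientAt_iff_hasFDerivAt]
    have hpfun : p = fun x' => ∫ a, π a * gaussK d v (m a) x' := funext hp
    rw [hpfun]
    refine key.congr_fderiv ?_
    rw [hcomm]
    ext z
    simp [InnerProductSpace.toDual_apply_apply]
  refine ⟨hGrad.differentiableAt, hGrad.gradient, ?_, fun x₀ =>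
    (hasGradientAt_log_gaussK hv (m x₀) x).gradient⟩
  -- log p
  have hlog : HasGradientAt (fun x' => Real.log (p x')) ((p x)⁻¹ • ∫ a, g a) x := by
    rw [hasGradientAt_iff_hasFDerivAt]
    have h := (Real.hasDerivAt_log hp_pos.ne').comp_hasFDerivAt x hGrad.hasFDerivAt
    refine h.congr_fderiv ?_
    exact ((InnerProductSpace.toDual ℝ (EuclideanSpace ℝ (Fin d))).map_smul _ _).symm
  rw [hlog.gradient, ← integral_smul]
  congr 1
  funext a
  rw [hg_def]
  simp only [smul_smul]
  congr 1
  rw [div_eq_mul_inv]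
  ring
end
end

section
/- Let d ≥ 1, let p : ℝ^d → ℝ be a continuously differentiable probability density with p(x) > 0 for all x, such that x ↦ ‖∇ log p(x)‖² p(x) is integrable, and let s : ℝ^d → ℝ^d be a continuously differentiable vector field with compact support. Then ∫ ‖s(x) − ∇ log p(x)‖² p(x) dx = ∫ (‖s(x)‖² + 2 div s(x)) p(x) dx + ∫ ‖∇ log p(x)‖² p(x) dx, where div s = Σᵢ ∂sᵢ/∂xᵢ. -/
open MeasureTheory

noncomputable section

/-- The divergence `div s = Σᵢ ∂sᵢ/∂xᵢ` of a vector field `s` on `ℝ^d`. -/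
def divergence (d : ℕ) (s : EuclideanSpace ℝ (Fin d) → EuclideanSpace ℝ (Fin d))
    (x : EuclideanSpace ℝ (Fin d)) : ℝ :=
  ∑ i, fderiv ℝ s x (EuclideanSpace.single i 1) i

lemma euclid_sum_single {d : ℕ} (v : EuclideanSpace ℝ (Fin d)) :
    ∑ i, v i • EuclideanSpace.single i (1:ℝ) = v := by
  have := (EuclideanSpace.basisFun (Fin d) ℝ).sum_repr v
  simpa [EuclideanSpace.basisFun_apply, EuclideanSpace.basisFun_repr] using this

lemma integral_fderiv_apply_eq_zero {d : ℕ} (g : EuclideanSpace ℝ (Fin d) → ℝ)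
    (hg : ContDiff ℝ 1 g) (hsupp : HasCompactSupport g) (v : EuclideanSpace ℝ (Fin d)) :
    ∫ x, fderiv ℝ g x v = 0 := by
  obtain ⟨C, hC⟩ := hg.lipschitzWith_of_hasCompactSupport hsupp one_ne_zero
  have hone : LipschitzWith 0 (fun _ : EuclideanSpace ℝ (Fin d) => (1:ℝ)) :=
    LipschitzWith.const' 1
  have h := LipschitzWith.integral_lineDeriv_mul_eq (μ := volume) hone hC hsupp (-v)
  have hL : ∀ x, lineDeriv ℝ (fun _ : EuclideanSpace ℝ (Fin d) => (1:ℝ)) x (-v) = 0 := by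
    intro x; simp [lineDeriv]
  have hR : ∀ x, lineDeriv ℝ g x (- -v) = fderiv ℝ g x v := by
    intro x
    rw [neg_neg, (hg.differentiable one_ne_zero x).lineDeriv_eq_fderiv]
  simp only [hL, hR, zero_mul, integral_zero, mul_one] at h
  exact h.symm

/-- Integration by parts / divergence lemma. -/
lemma integral_div_add_inner_grad_eq_zero {d : ℕ}
    (p : EuclideanSpace ℝ (Fin d) → ℝ) (hp_smooth : ContDiff ℝ 1 p)
    (s : EuclideanSpace ℝ (Fin d) → EuclideanSpace ℝ (Fin d))
    (hs_smooth : ContDiff ℝ 1 s) (hs_supp : HasCompactSupport s) :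
    ∫ x, fderiv ℝ p x (s x) = - ∫ x, divergence d s x * p x := by
  classical
  set e : Fin d → EuclideanSpace ℝ (Fin d) := fun i => EuclideanSpace.single i 1 with he
  -- derivative of the coordinate functions of s
  have hproj : ∀ i, ContDiff ℝ 1 (fun y => s y i) := fun i =>
    (EuclideanSpace.proj (𝕜 := ℝ) i).contDiff.comp hs_smooth
  have hder : ∀ (i : Fin d) (x), fderiv ℝ (fun y => s y i * p y) x =
      s x i • fderiv ℝ p x +
        p x • ((EuclideanSpace.proj (𝕜 := ℝ) i).comp (fderiv ℝ s x)) := by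
    intro i x
    have h1 : HasFDerivAt (fun y => s y i)
        ((EuclideanSpace.proj (𝕜 := ℝ) i).comp (fderiv ℝ s x)) x :=
      (EuclideanSpace.proj (𝕜 := ℝ) i).hasFDerivAt.comp x
        (hs_smooth.differentiable one_ne_zero x).hasFDerivAt
    have h2 := (hp_smooth.differentiable one_ne_zero x).hasFDerivAt
    exact (h1.mul h2).fderiv
  have hsupp_i : ∀ i : Fin d, HasCompactSupport (fun y => s y i * p y) := by
    intro i
    apply hs_supp.mono
    intro x hx
    simp only [Function.mem_support, ne_eq] at hx ⊢
    intro h0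
    apply hx
    rw [show s x i = (0 : EuclideanSpace ℝ (Fin d)) i from by rw [h0]] at *
    simp at hx
  have hzero : ∀ i : Fin d,
      ∫ x, (s x i * fderiv ℝ p x (e i) + p x * fderiv ℝ s x (e i) i) = 0 := by
    intro i
    have h := integral_fderiv_apply_eq_zero (fun y => s y i * p y)
      ((hproj i).mul hp_smooth) (hsupp_i i) (e i)
    have : ∀ x, fderiv ℝ (fun y => s y i * p y) x (e i)
        = s x i * fderiv ℝ p x (e i) + p x * fderiv ℝ s x (e i) i := by
      intro x
      rw [hder i x]
      simp [smul_eq_mul]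
    simp_rw [this] at h
    exact h
  -- integrability of each summand
  have hcont_fderiv_p : Continuous fun x => fderiv ℝ p x :=
    hp_smooth.continuous_fderiv one_ne_zero
  have hcont_fderiv_s : Continuous fun x => fderiv ℝ s x :=
    hs_smooth.continuous_fderiv one_ne_zero
  have hint : ∀ i : Fin d,
      Integrable (fun x => s x i * fderiv ℝ p x (e i) + p x * fderiv ℝ s x (e i) i) := by
    intro i
    have c1 : Continuous fun x => s x i * fderiv ℝ p x (e i) :=
      ((EuclideanSpace.proj (𝕜 := ℝ) i).continuous.comp hs_smooth.continuous).mul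
        (hcont_fderiv_p.clm_apply continuous_const)
    have c2 : Continuous fun x => p x * fderiv ℝ s x (e i) i :=
      hp_smooth.continuous.mul
        ((EuclideanSpace.proj (𝕜 := ℝ) i).continuous.comp
          (hcont_fderiv_s.clm_apply continuous_const))
    have s1 : HasCompactSupport fun x => s x i * fderiv ℝ p x (e i) := by
      apply hs_supp.mono
      intro x hx
      simp only [Function.mem_support, ne_eq] at hx ⊢
      intro h0
      apply hx
      rw [show s x i = (0 : EuclideanSpace ℝ (Fin d)) i from by rw [h0]] at *
      simp at hx
    have s2 : HasCompactSupport fun x => p x * fderiv ℝ s x (e i) i := by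
      apply (hs_supp.fderiv ℝ).mono
      intro x hx
      simp only [Function.mem_support, ne_eq] at hx ⊢
      intro h0
      apply hx
      rw [h0]
      simp
    exact (c1.integrable_of_hasCompactSupport s1).add (c2.integrable_of_hasCompactSupport s2)
  have hsum : ∫ x, ∑ i : Fin d,
      (s x i * fderiv ℝ p x (e i) + p x * fderiv ℝ s x (e i) i) = 0 := by
    rw [integral_finset_sum _ (fun i _ => hint i)]
    simp [hzero]
  have hpt : ∀ x, ∑ i : Fin d,
      (s x i * fderiv ℝ p x (e i) + p x * fderiv ℝ s x (e i) i)
      = fderiv ℝ p x (s x) + divergence d s x * p x := by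
    intro x
    rw [Finset.sum_add_distrib]
    congr 1
    · conv_rhs => rw [← euclid_sum_single (s x)]
      rw [map_sum]
      simp [smul_eq_mul, he]
    · rw [divergence, Finset.sum_mul, ← Finset.mul_sum]
      rw [Finset.mul_sum]
      congr 1
      ext i
      ring
  simp_rw [hpt] at hsum
  -- split the integral
  have hintA : Integrable (fun x => fderiv ℝ p x (s x)) := by
    have c : Continuous fun x => fderiv ℝ p x (s x) :=
      hcont_fderiv_p.clm_apply hs_smooth.continuous
    have sp : HasCompactSupport fun x => fderiv ℝ p x (s x) := by
      apply hs_supp.mono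
      intro x hx
      simp only [Function.mem_support, ne_eq] at hx ⊢
      intro h0
      apply hx
      rw [h0]
      simp
    exact c.integrable_of_hasCompactSupport sp
  have hintB : Integrable (fun x => divergence d s x * p x) := by
    have c : Continuous fun x => divergence d s x :=
      continuous_finset_sum _ fun i _ =>
        (EuclideanSpace.proj (𝕜 := ℝ) i).continuous.comp
          (hcont_fderiv_s.clm_apply continuous_const)
    have sp : HasCompactSupport fun x => divergence d s x * p x := by
      apply (hs_supp.fderiv ℝ).mono
      intro x hx
      simp only [Function.mem_support, ne_eq] at hx ⊢
      intro h0
      apply hx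
      simp [divergence, h0]
    exact (c.mul hp_smooth.continuous).integrable_of_hasCompactSupport sp
  rw [integral_add hintA hintB] at hsum
  linarith

end

/-- **The implicit score matching (ISM) identity.** For a positive `C¹` probability density `p`
on `ℝ^d` with square-integrable score (against `p`), and a compactly supported `C¹` vector
field `s`,
`∫ ‖s − ∇log p‖² p = ∫ (‖s‖² + 2 div s) p + ∫ ‖∇log p‖² p`. -/
theorem implicit_score_matching
    (d : ℕ) (hd : 1 ≤ d)
    (p : EuclideanSpace ℝ (Fin d) → ℝ)
    (hp_smooth : ContDiff ℝ 1 p) (hp_pos : ∀ x, 0 < p x)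
    (hp_int : ∫ x, p x = 1)
    (h_score_int :
      Integrable (fun x => ‖gradient (fun y => Real.log (p y)) x‖ ^ 2 * p x))
    (s : EuclideanSpace ℝ (Fin d) → EuclideanSpace ℝ (Fin d))
    (hs_smooth : ContDiff ℝ 1 s) (hs_supp : HasCompactSupport s) :
    ∫ x, ‖s x - gradient (fun y => Real.log (p y)) x‖ ^ 2 * p x
      = (∫ x, (‖s x‖ ^ 2 + 2 * divergence d s x) * p x)
        + ∫ x, ‖gradient (fun y => Real.log (p y)) x‖ ^ 2 * p x := by
  set G : EuclideanSpace ℝ (Fin d) → EuclideanSpace ℝ (Fin d) :=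
    fun x => gradient (fun y => Real.log (p y)) x with hG
  have hlogD : ∀ x, HasFDerivAt (fun y => Real.log (p y)) ((p x)⁻¹ • fderiv ℝ p x) x := by
    intro x
    exact (Real.hasDerivAt_log (hp_pos x).ne').comp_hasFDerivAt x
      (hp_smooth.differentiable one_ne_zero x).hasFDerivAt
  have hinner : ∀ x, inner ℝ (s x) (G x) * p x = fderiv ℝ p x (s x) := by
    intro x
    have h1 : G x = (InnerProductSpace.toDual ℝ _).symm ((p x)⁻¹ • fderiv ℝ p x) := by
      rw [hG]
      show gradient _ x = _
      rw [gradient, (hlogD x).fderiv]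
    have h2 : inner ℝ (G x) (s x) = ((p x)⁻¹ • fderiv ℝ p x) (s x) := by
      rw [h1, InnerProductSpace.toDual_symm_apply]
    rw [real_inner_comm, h2]
    have := (hp_pos x).ne'
    field_simp
    rw [ContinuousLinearMap.smul_apply, smul_eq_mul]
    field_simp
  have hpt : ∀ x, ‖s x - G x‖ ^ 2 * p x
      = ‖s x‖ ^ 2 * p x - 2 * fderiv ℝ p x (s x) + ‖G x‖ ^ 2 * p x := by
    intro x
    rw [← hinner x]
    rw [@norm_sub_sq_real]
    ring
  have hcont_fderiv_p : Continuous fun x => fderiv ℝ p x :=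
    hp_smooth.continuous_fderiv one_ne_zero
  have hcont_fderiv_s : Continuous fun x => fderiv ℝ s x :=
    hs_smooth.continuous_fderiv one_ne_zero
  have hIA : Integrable (fun x => ‖s x‖ ^ 2 * p x) := by
    have c : Continuous fun x => ‖s x‖ ^ 2 * p x :=
      ((hs_smooth.continuous.norm).pow 2).mul hp_smooth.continuous
    have sp : HasCompactSupport fun x => ‖s x‖ ^ 2 * p x := by
      apply hs_supp.mono
      intro x hx
      simp only [Function.mem_support, ne_eq] at hx ⊢
      intro h0; apply hx; rw [h0]; simp
    exact c.integrable_of_hasCompactSupport sp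
  have hIB : Integrable (fun x => fderiv ℝ p x (s x)) := by
    have c : Continuous fun x => fderiv ℝ p x (s x) :=
      hcont_fderiv_p.clm_apply hs_smooth.continuous
    have sp : HasCompactSupport fun x => fderiv ℝ p x (s x) := by
      apply hs_supp.mono
      intro x hx
      simp only [Function.mem_support, ne_eq] at hx ⊢
      intro h0; apply hx; rw [h0]; simp
    exact c.integrable_of_hasCompactSupport sp
  have hID : Integrable (fun x => divergence d s x * p x) := by
    have c : Continuous fun x => divergence d s x :=
      continuous_finset_sum _ fun i _ =>
        (EuclideanSpace.proj (𝕜 := ℝ) i).continuous.comp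
          (hcont_fderiv_s.clm_apply continuous_const)
    have sp : HasCompactSupport fun x => divergence d s x * p x := by
      apply (hs_supp.fderiv ℝ).mono
      intro x hx
      simp only [Function.mem_support, ne_eq] at hx ⊢
      intro h0; apply hx; simp [divergence, h0]
    exact (c.mul hp_smooth.continuous).integrable_of_hasCompactSupport sp
  have hsplit : ∫ x, ‖s x - G x‖ ^ 2 * p x
      = (∫ x, ‖s x‖ ^ 2 * p x) - 2 * (∫ x, fderiv ℝ p x (s x))
        + ∫ x, ‖G x‖ ^ 2 * p x := by
    have e1 : Integrable (fun x => ‖s x‖ ^ 2 * p x - 2 * fderiv ℝ p x (s x)) :=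
      hIA.sub (hIB.const_mul 2)
    have e2 : ∫ x, (‖s x‖ ^ 2 * p x - 2 * fderiv ℝ p x (s x))
        = (∫ x, ‖s x‖ ^ 2 * p x) - 2 * ∫ x, fderiv ℝ p x (s x) := by
      rw [integral_sub hIA (hIB.const_mul 2), integral_const_mul]
    simp_rw [hpt]
    rw [integral_add e1 h_score_int, e2]
  have hibp := integral_div_add_inner_grad_eq_zero p hp_smooth s hs_smooth hs_supp
  have hsplit2 : ∫ x, (‖s x‖ ^ 2 + 2 * divergence d s x) * p x
      = (∫ x, ‖s x‖ ^ 2 * p x) + 2 * ∫ x, divergence d s x * p x := by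
    have e3 : Integrable (fun x => 2 * (divergence d s x * p x)) := hID.const_mul 2
    have e4 : ∀ x, (‖s x‖ ^ 2 + 2 * divergence d s x) * p x
        = ‖s x‖ ^ 2 * p x + 2 * (divergence d s x * p x) := by intro x; ring
    simp_rw [e4]
    rw [integral_add hIA e3, integral_const_mul]
  rw [hsplit, hsplit2, hibp]
  ring
end

section
/- Let (β_k)_{k≥1} be a sequence in [0,1], let x ∈ ℝ, and on a probability space let (Z_k)_{k≥1} be a sequence of independent standard real Gaussian random variables. Define X₀ = x and Xₙ = √(1 − βₙ) · Xₙ₋₁ + √βₙ · Zₙ for n ≥ 1. Then for every n ≥ 0, the law of Xₙ is the Gaussian distribution on ℝ with mean x · √ᾱₙ and variance 1 − ᾱₙ, where ᾱₙ = ∏_{k=1}^{n} (1 − β_k). -/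
open MeasureTheory ProbabilityTheory Real
open scoped NNReal ENNReal

noncomputable section

lemma vp_pdf_mul_eq (m1 m2 : ℝ) (v1 v2 : ℝ≥0) (hv1 : v1 ≠ 0) (hv2 : v2 ≠ 0) (u y : ℝ) :
    gaussianPDFReal m1 v1 y * gaussianPDFReal m2 v2 (u - y)
      = gaussianPDFReal (m1 + m2) (v1 + v2) u *
        gaussianPDFReal (m1 + v1 * (u - m1 - m2) / (v1 + v2)) (v1 * v2 / (v1 + v2)) y := by
  have ha : (0:ℝ) < (v1:ℝ) := by
    exact_mod_cast pos_iff_ne_zero.2 hv1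
  have hb : (0:ℝ) < (v2:ℝ) := by
    exact_mod_cast pos_iff_ne_zero.2 hv2
  have hab : (0:ℝ) < (v1:ℝ) + (v2:ℝ) := by linarith
  simp only [gaussianPDFReal]
  have hcV : ((v1 * v2 / (v1 + v2) : ℝ≥0) : ℝ) = (v1:ℝ) * v2 / ((v1:ℝ) + v2) := by
    push_cast; ring
  have hcS : ((v1 + v2 : ℝ≥0) : ℝ) = (v1:ℝ) + v2 := by push_cast; ring
  rw [hcV, hcS]
  rw [mul_mul_mul_comm, mul_mul_mul_comm ((√(2 * π * ((v1:ℝ)+v2)))⁻¹), ← Real.exp_add,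
    ← Real.exp_add]
  congr 1
  · rw [← mul_inv, ← mul_inv, ← Real.sqrt_mul (by positivity), ← Real.sqrt_mul (by positivity)]
    congr 2
    field_simp
  · congr 1
    field_simp
    ring

lemma vp_gaussianReal_conv_pos (m1 m2 : ℝ) (v1 v2 : ℝ≥0) (hv1 : v1 ≠ 0) (hv2 : v2 ≠ 0) :
    Measure.conv (gaussianReal m1 v1) (gaussianReal m2 v2) = gaussianReal (m1 + m2) (v1 + v2) := by
  have hV : (v1 * v2 / (v1 + v2) : ℝ≥0) ≠ 0 := by
    apply div_ne_zero (mul_ne_zero hv1 hv2)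
    simp [hv1]
  have hS : (v1 + v2 : ℝ≥0) ≠ 0 := by simp [hv1]
  rw [gaussianReal_of_var_ne_zero _ hv1, gaussianReal_of_var_ne_zero _ hv2,
    gaussianReal_of_var_ne_zero _ hS]
  ext s hs
  rw [withDensity_apply _ hs, Measure.conv,
    Measure.map_apply measurable_add hs,
    Measure.prod_apply (measurable_add hs)]
  have hker : ∀ x : ℝ, (volume.withDensity (gaussianPDF m2 v2))
      (Prod.mk x ⁻¹' ((fun p : ℝ × ℝ => p.1 + p.2) ⁻¹' s))
      = ∫⁻ u, s.indicator (fun u => gaussianPDF m2 v2 (u - x)) u := by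
    intro x
    have hpre : (Prod.mk x ⁻¹' ((fun p : ℝ × ℝ => p.1 + p.2) ⁻¹' s))
        = (fun y => x + y) ⁻¹' s := rfl
    rw [hpre, withDensity_apply _ (measurable_const_add x hs),
      ← lintegral_indicator (measurable_const_add x hs)]
    have : ∀ y, ((fun y => x + y) ⁻¹' s).indicator (gaussianPDF m2 v2) y
        = s.indicator (fun u => gaussianPDF m2 v2 (u - x)) (x + y) := by
      intro y
      by_cases h : x + y ∈ s <;>
        simp [Set.indicator, h, Set.mem_preimage]
    simp_rw [this]
    exact lintegral_add_left_eq_self (fun u => s.indicator (fun u => gaussianPDF m2 v2 (u - x)) u) x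
  simp_rw [hker]
  rw [lintegral_withDensity_eq_lintegral_mul _ (measurable_gaussianPDF m1 v1)]
  swap
  · exact Measurable.lintegral_prod_right <| (measurable_gaussianPDF m2 v2).comp
      (measurable_snd.sub measurable_fst) |>.indicator (measurable_snd hs)
  have key : ∀ u : ℝ, (∫⁻ x, gaussianPDF m1 v1 x * gaussianPDF m2 v2 (u - x))
      = gaussianPDF (m1 + m2) (v1 + v2) u := by
    intro u
    have hpt : ∀ x : ℝ, gaussianPDF m1 v1 x * gaussianPDF m2 v2 (u - x)
        = gaussianPDF (m1 + m2) (v1 + v2) u *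
          gaussianPDF (m1 + v1 * (u - m1 - m2) / (v1 + v2)) (v1 * v2 / (v1 + v2)) x := by
      intro x
      simp only [gaussianPDF, ← ENNReal.ofReal_mul (gaussianPDFReal_nonneg _ _ _)]
      rw [vp_pdf_mul_eq m1 m2 v1 v2 hv1 hv2 u x]
    simp_rw [hpt]
    rw [lintegral_const_mul _ (measurable_gaussianPDF _ _),
      lintegral_gaussianPDF_eq_one _ hV, mul_one]
  have hind : ∀ u : ℝ, s.indicator (gaussianPDF (m1 + m2) (v1 + v2)) u
      = ∫⁻ x, gaussianPDF m1 v1 x * s.indicator (fun u => gaussianPDF m2 v2 (u - x)) u := by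
    intro u
    by_cases hu : u ∈ s
    · simp only [Set.indicator_of_mem hu]
      exact (key u).symm
    · simp [Set.indicator_of_notMem hu]
  calc (∫⁻ x, gaussianPDF m1 v1 x *
        ∫⁻ u, s.indicator (fun u => gaussianPDF m2 v2 (u - x)) u)
      = ∫⁻ x, ∫⁻ u, gaussianPDF m1 v1 x *
          s.indicator (fun u => gaussianPDF m2 v2 (u - x)) u := by
        congr 1; ext x
        have hm : Measurable fun u => s.indicator (fun u => gaussianPDF m2 v2 (u - x)) u :=
          Measurable.indicator ((measurable_gaussianPDF m2 v2).comp (measurable_sub_const x)) hs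
        exact (lintegral_const_mul _ hm).symm
    _ = ∫⁻ u, ∫⁻ x, gaussianPDF m1 v1 x *
          s.indicator (fun u => gaussianPDF m2 v2 (u - x)) u := by
        apply lintegral_lintegral_swap
        apply Measurable.aemeasurable
        exact ((measurable_gaussianPDF m1 v1).comp measurable_fst).mul
          (((measurable_gaussianPDF m2 v2).comp
            (measurable_snd.sub measurable_fst)).indicator (measurable_snd hs))
    _ = ∫⁻ u, s.indicator (gaussianPDF (m1 + m2) (v1 + v2)) u := by
        simp_rw [← hind]
    _ = ∫⁻ u in s, gaussianPDF (m1 + m2) (v1 + v2) u := lintegral_indicator hs _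

lemma vp_dirac_conv (c : ℝ) (μ : Measure ℝ) [SFinite μ] :
    Measure.conv (Measure.dirac c) μ = μ.map (c + ·) := by
  rw [Measure.conv, Measure.dirac_prod, Measure.map_map measurable_add measurable_prodMk_left]
  rfl

lemma vp_conv_dirac (c : ℝ) (μ : Measure ℝ) [SFinite μ] :
    Measure.conv μ (Measure.dirac c) = μ.map (· + c) := by
  rw [Measure.conv, Measure.prod_dirac, Measure.map_map measurable_add measurable_prodMk_right]
  rfl

lemma vp_gaussianReal_conv (m1 m2 : ℝ) (v1 v2 : ℝ≥0) :
    Measure.conv (gaussianReal m1 v1) (gaussianReal m2 v2) = gaussianReal (m1 + m2) (v1 + v2) := by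
  by_cases hv1 : v1 = 0
  · subst hv1
    rw [gaussianReal_zero_var, vp_dirac_conv, gaussianReal_map_const_add, zero_add, add_comm]
  by_cases hv2 : v2 = 0
  · subst hv2
    rw [gaussianReal_zero_var, vp_conv_dirac, gaussianReal_map_add_const, add_zero]
  exact vp_gaussianReal_conv_pos m1 m2 v1 v2 hv1 hv2

lemma vp_indep_map_add {Ω : Type*} [MeasureSpace Ω] [IsProbabilityMeasure (ℙ : Measure Ω)]
    {X Y : Ω → ℝ} (hX : Measurable X) (hY : Measurable Y) (h : IndepFun X Y ℙ) :
    (ℙ : Measure Ω).map (fun ω => X ω + Y ω)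
      = Measure.conv ((ℙ : Measure Ω).map X) ((ℙ : Measure Ω).map Y) := by
  rw [Measure.conv,
    ← (indepFun_iff_map_prod_eq_prod_map_map hX.aemeasurable hY.aemeasurable).1 h,
    Measure.map_map measurable_add (hX.prodMk hY)]
  rfl

/-- **Law of the discrete variance-preserving (DDPM) noising recursion.** If `β_k ∈ [0,1]`,
`(Z_k)` are i.i.d. standard Gaussians, `X₀ = x` and
`Xₙ = √(1 − βₙ) Xₙ₋₁ + √βₙ Zₙ`, then `Xₙ ∼ N(x √ᾱₙ, 1 − ᾱₙ)` with
`ᾱₙ = ∏_{k=1}^n (1 − β_k)`. -/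
theorem vp_discrete_noising_law
    (β : ℕ → ℝ) (hβ : ∀ k, β k ∈ Set.Icc (0 : ℝ) 1) (x : ℝ)
    (Ω : Type*) [MeasureSpace Ω] [IsProbabilityMeasure (ℙ : Measure Ω)]
    (Z : ℕ → Ω → ℝ) (hZ_meas : ∀ k, Measurable (Z k))
    (hZ_indep : iIndepFun Z ℙ)
    (hZ_gauss : ∀ k, (ℙ : Measure Ω).map (Z k) = gaussianReal 0 1)
    (X : ℕ → Ω → ℝ)
    (hX0 : ∀ ω, X 0 ω = x)
    (hX : ∀ n ω, X (n + 1) ω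
      = Real.sqrt (1 - β (n + 1)) * X n ω + Real.sqrt (β (n + 1)) * Z (n + 1) ω) :
    ∀ n, (ℙ : Measure Ω).map (X n)
      = gaussianReal (x * Real.sqrt (∏ k ∈ Finset.range n, (1 - β (k + 1))))
          (Real.toNNReal (1 - ∏ k ∈ Finset.range n, (1 - β (k + 1)))) := by
  -- closed form recursion as a function of the noise sequence
  set g : ℕ → (ℕ → ℝ) → ℝ := fun n => Nat.rec (fun _ => x)
    (fun n ih z => Real.sqrt (1 - β (n + 1)) * ih z + Real.sqrt (β (n + 1)) * z (n + 1)) n with hg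
  have hgX : ∀ n ω, X n ω = g n (fun k => Z k ω) := by
    intro n
    induction n with
    | zero => intro ω; exact hX0 ω
    | succ n ih => intro ω; rw [hX n ω, ih ω]
  have hg_meas : ∀ n, Measurable (g n) := by
    intro n
    induction n with
    | zero => exact measurable_const
    | succ n ih =>
      exact (ih.const_mul _).add ((measurable_pi_apply (n + 1)).const_mul _)
  have hg_dep : ∀ n (z z' : ℕ → ℝ), (∀ k, k ≤ n → z k = z' k) → g n z = g n z' := by
    intro n
    induction n with
    | zero => intro z z' _; rfl
    | succ n ih =>
      intro z z' h
      show Real.sqrt (1 - β (n + 1)) * g n z + Real.sqrt (β (n + 1)) * z (n + 1)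
        = Real.sqrt (1 - β (n + 1)) * g n z' + Real.sqrt (β (n + 1)) * z' (n + 1)
      rw [ih z z' (fun k hk => h k (hk.trans (Nat.le_succ n))), h (n + 1) le_rfl]
  have hX_meas : ∀ n, Measurable (X n) := by
    intro n
    have : X n = fun ω => g n (fun k => Z k ω) := funext (hgX n)
    rw [this]
    exact (hg_meas n).comp (measurable_pi_lambda _ hZ_meas)
  -- independence of `X n` and `Z (n+1)`
  have hindep : ∀ n, IndepFun (X n) (Z (n + 1)) ℙ := by
    intro n
    have hST : Disjoint (Finset.range (n + 1)) ({n + 1} : Finset ℕ) := by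
      simp [Finset.disjoint_singleton_right]
    have h0 := hZ_indep.indepFun_finset (Finset.range (n + 1)) {n + 1} hST hZ_meas
    set φ : ((Finset.range (n + 1) : Finset ℕ) → ℝ) → ℝ := fun v =>
      g n (fun k => if h : k ∈ Finset.range (n + 1) then v ⟨k, h⟩ else 0) with hφdef
    have hφ : Measurable φ := by
      apply (hg_meas n).comp
      apply measurable_pi_lambda
      intro k
      by_cases h : k ∈ Finset.range (n + 1)
      · simpa [h] using measurable_pi_apply (⟨k, h⟩ : (Finset.range (n + 1) : Finset ℕ))
      · simp [h]
    have hmem : (n + 1 : ℕ) ∈ ({n + 1} : Finset ℕ) := Finset.mem_singleton_self _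
    set ψ : ((({n + 1} : Finset ℕ) : Finset ℕ) → ℝ) → ℝ := fun v => v ⟨n + 1, hmem⟩ with hψdef
    have hψ : Measurable ψ := measurable_pi_apply _
    have h1 := h0.comp hφ hψ
    have he1 : (φ ∘ fun a (i : (Finset.range (n + 1) : Finset ℕ)) => Z i a) = X n := by
      funext a
      show g n (fun k => if h : k ∈ Finset.range (n + 1) then Z k a else 0) = X n a
      rw [hgX n a]
      apply hg_dep
      intro k hk
      simp [Finset.mem_range, Nat.lt_succ_iff, hk]
    have he2 : (ψ ∘ fun a (i : (({n + 1} : Finset ℕ) : Finset ℕ)) => Z i a) = Z (n + 1) := rfl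
    rwa [he1, he2] at h1
  -- the induction
  intro n
  induction n with
  | zero =>
    have : X 0 = fun _ => x := funext hX0
    rw [this]
    simp [Measure.map_const, gaussianReal_zero_var]
  | succ n ih =>
    have hβ1 : 0 ≤ β (n + 1) := (hβ (n + 1)).1
    have hβ2 : β (n + 1) ≤ 1 := (hβ (n + 1)).2
    have hα0 : 0 ≤ ∏ k ∈ Finset.range n, (1 - β (k + 1)) :=
      Finset.prod_nonneg fun k _ => by linarith [(hβ (k + 1)).2]
    have hα1 : ∏ k ∈ Finset.range n, (1 - β (k + 1)) ≤ 1 :=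
      Finset.prod_le_one (fun k _ => by linarith [(hβ (k + 1)).2])
        (fun k _ => by linarith [(hβ (k + 1)).1])
    set α := ∏ k ∈ Finset.range n, (1 - β (k + 1)) with hα
    have hfe : X (n + 1) = fun ω =>
        (fun ω => Real.sqrt (1 - β (n + 1)) * X n ω) ω
          + (fun ω => Real.sqrt (β (n + 1)) * Z (n + 1) ω) ω := funext fun ω => hX n ω
    have hA : Measurable fun ω => Real.sqrt (1 - β (n + 1)) * X n ω :=
      (hX_meas n).const_mul _
    have hB : Measurable fun ω => Real.sqrt (β (n + 1)) * Z (n + 1) ω :=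
      (hZ_meas (n + 1)).const_mul _
    have hABindep : IndepFun (fun ω => Real.sqrt (1 - β (n + 1)) * X n ω)
        (fun ω => Real.sqrt (β (n + 1)) * Z (n + 1) ω) ℙ :=
      (hindep n).comp (measurable_const_mul _) (measurable_const_mul _)
    have hmapA : (ℙ : Measure Ω).map (fun ω => Real.sqrt (1 - β (n + 1)) * X n ω)
        = gaussianReal (Real.sqrt (1 - β (n + 1)) * (x * Real.sqrt α))
            (NNReal.mk ((Real.sqrt (1 - β (n + 1)))^2) (sq_nonneg _) * Real.toNNReal (1 - α)) := by
      have : (fun ω => Real.sqrt (1 - β (n + 1)) * X n ω)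
          = (fun y => Real.sqrt (1 - β (n + 1)) * y) ∘ X n := rfl
      rw [this, ← Measure.map_map (measurable_const_mul _) (hX_meas n), ih,
        gaussianReal_map_const_mul]
    have hmapB : (ℙ : Measure Ω).map (fun ω => Real.sqrt (β (n + 1)) * Z (n + 1) ω)
        = gaussianReal (Real.sqrt (β (n + 1)) * 0)
            (NNReal.mk ((Real.sqrt (β (n + 1)))^2) (sq_nonneg _) * 1) := by
      have : (fun ω => Real.sqrt (β (n + 1)) * Z (n + 1) ω)
          = (fun y => Real.sqrt (β (n + 1)) * y) ∘ Z (n + 1) := rfl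
      rw [this, ← Measure.map_map (measurable_const_mul _) (hZ_meas (n + 1)), hZ_gauss,
        gaussianReal_map_const_mul]
    rw [hfe, vp_indep_map_add hA hB hABindep, hmapA, hmapB, vp_gaussianReal_conv]
    congr 1
    · rw [mul_zero, add_zero, Finset.prod_range_succ, ← hα,
        Real.sqrt_mul hα0, mul_comm (Real.sqrt α)]
      ring
    · rw [← NNReal.coe_inj]
      push_cast
      rw [Real.coe_toNNReal _ (by linarith), Real.coe_toNNReal _ (by
        rw [Finset.prod_range_succ, ← hα]
        nlinarith), Real.sq_sqrt (by linarith : (0:ℝ) ≤ 1 - β (n + 1)),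
        Real.sq_sqrt hβ1, Finset.prod_range_succ, ← hα]
      ring
end
end
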